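/- Write a := false and b := true in Bool, and let R := {u : ℕ → Bool | ∃ k ≥ 1, b^k is not a factor of u}. Call S : Set (List Bool) a solution if every w ∈ S is nonempty and ι f ∈ R for every f : ℕ → List Bool with f n ∈ S for all n. Then the singleton {[a]} is a solution, but there is no maximal solution: for every solution S there exists a solution S' with S ⊂ S' (strict inclusion). -/

import Mathlib

/-- `b^k` is a factor of the ω-word `u` (with `b := true`). -/
def PowBFactor (u : ℕ → Bool) (k : ℕ) : Prop :=
  ∃ n : ℕ, ∀ j < k, u (n + j) = true

/-- The ω-language of words avoiding `b^k` as a factor for some `k ≥ 1`. -/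
def Rset : Set (ℕ → Bool) :=
  {u | ∃ k ≥ 1, ¬ PowBFactor u k}

/-- Auxiliary function computing the letter at index `n` of the concatenation
`[a] ++ f k ++ [a] ++ f (k+1) ++ ⋯` (with `a := false`). -/
def iotaAux (f : ℕ → List Bool) (k n : ℕ) : Bool :=
  if hn : n < (false :: f k).length then (false :: f k).get ⟨n, hn⟩
  else iotaAux f (k + 1) (n - (false :: f k).length)
termination_by n
decreasing_by
  simp only [List.length_cons, not_lt] at hn
  simp only [List.length_cons]
  omega

/-- The ω-word `[a] ++ f 0 ++ [a] ++ f 1 ++ [a] ++ f 2 ++ ⋯` (with `a := false`). -/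
def iota (f : ℕ → List Bool) : ℕ → Bool :=
  iotaAux f 0

/-- `S` is a solution: all its words are nonempty and every ω-word
`[a] ++ f 0 ++ [a] ++ f 1 ++ ⋯` with all `f n ∈ S` belongs to `Rset`. -/
def IsSolution (S : Set (List Bool)) : Prop :=
  (∀ w ∈ S, w ≠ []) ∧ ∀ f : ℕ → List Bool, (∀ n, f n ∈ S) → iota f ∈ Rset

def NMS.Run (w : List Bool) (k : ℕ) : Prop :=
  ∃ i, ∀ j < k, w.getD (i + j) false = true

def NMS.pos (f : ℕ → List Bool) : ℕ → ℕ
  | 0 => 0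
  | k + 1 => NMS.pos f k + ((f k).length + 1)

namespace NMS

lemma iotaAux_eq (f : ℕ → List Bool) (k n : ℕ) :
    iotaAux f k n = if hn : n < (false :: f k).length then (false :: f k).get ⟨n, hn⟩
      else iotaAux f (k + 1) (n - (false :: f k).length) := by
  rw [iotaAux]

lemma shift (f : ℕ → List Bool) (k m : ℕ) : iota f (pos f k + m) = iotaAux f k m := by
  induction k generalizing m with
  | zero => simp [iota, pos]
  | succ k ih =>
    have h1 : pos f (k + 1) + m = pos f k + ((f k).length + 1 + m) := by
      simp [pos]; ring
    rw [h1, ih, iotaAux_eq]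
    have h : ¬ ((f k).length + 1 + m < (false :: f k).length) := by
      simp [List.length_cons]; omega
    rw [dif_neg h]
    congr 1
    simp [List.length_cons]

lemma iota_pos (f : ℕ → List Bool) (k : ℕ) : iota f (pos f k) = false := by
  have := shift f k 0
  rw [Nat.add_zero] at this
  rw [this, iotaAux_eq, dif_pos (by simp)]
  rfl

lemma iota_get (f : ℕ → List Bool) (k j : ℕ) (hj : j < (f k).length) :
    iota f (pos f k + (1 + j)) = (f k).get ⟨j, hj⟩ := by
  rw [shift, iotaAux_eq, dif_pos (by simp; omega)]
  simp [Nat.add_comm 1 j, List.get_cons_succ]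

lemma decompose (f : ℕ → List Bool) (n : ℕ) :
    ∃ k r, r ≤ (f k).length ∧ n = pos f k + r := by
  induction n with
  | zero => exact ⟨0, 0, Nat.zero_le _, by simp [pos]⟩
  | succ n ih =>
    obtain ⟨k, r, hr, he⟩ := ih
    rcases lt_or_eq_of_le hr with h | h
    · exact ⟨k, r + 1, h, by omega⟩
    · exact ⟨k + 1, 0, Nat.zero_le _, by simp [pos]; omega⟩

lemma L1 (K : ℕ) (f : ℕ → List Bool) (hK : ∀ n, ¬ Run (f n) K) :
    ¬ PowBFactor (iota f) (K + 1) := by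
  rintro ⟨n, hn⟩
  obtain ⟨k, r, hr, rfl⟩ := decompose f n
  rcases Nat.eq_zero_or_pos r with h0 | h0
  · have := hn 0 (by omega)
    simp only [h0, Nat.add_zero] at this
    rw [iota_pos] at this
    exact absurd this (by simp)
  · obtain ⟨i, rfl⟩ : ∃ i, r = 1 + i := ⟨r - 1, by omega⟩
    have hi : i < (f k).length := by omega
    by_cases hc : i + (K + 1) ≤ (f k).length
    · refine hK k ⟨i, fun j hj => ?_⟩
      have hij : i + j < (f k).length := by omega
      have := hn j (by omega)
      have he : pos f k + (1 + i) + j = pos f k + (1 + (i + j)) := by ring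
      rw [he, iota_get f k (i + j) hij] at this
      rw [List.getD_eq_getElem _ _ hij]
      simpa using this
    · set j := (f k).length - i with hjdef
      have hj1 : j < K + 1 := by omega
      have := hn j hj1
      have he : pos f k + (1 + i) + j = pos f (k + 1) := by
        simp [pos]; omega
      rw [he, iota_pos] at this
      exact absurd this (by simp)

lemma getD_lt {w : List Bool} {m : ℕ} (h : w.getD m false = true) : m < w.length := by
  by_contra hc
  rw [List.getD_eq_default _ _ (by omega)] at h
  exact absurd h (by simp)

lemma L2 (f : ℕ → List Bool) (hf : ∀ n, Run (f n) n) (k : ℕ) :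
    PowBFactor (iota f) k := by
  obtain ⟨i, hi⟩ := hf k
  refine ⟨pos f k + (1 + i), fun j hj => ?_⟩
  have h := hi j hj
  have hlt : i + j < (f k).length := getD_lt h
  have he : pos f k + (1 + i) + j = pos f k + (1 + (i + j)) := by ring
  rw [he, iota_get f k (i + j) hlt]
  rw [List.getD_eq_getElem _ _ hlt] at h
  simpa using h

lemma run_anti {w : List Bool} {k m : ℕ} (h : k ≤ m) (hm : Run w m) : Run w k := by
  obtain ⟨i, hi⟩ := hm
  exact ⟨i, fun j hj => hi j (by omega)⟩

lemma run_replicate (K : ℕ) : Run (List.replicate K true) K := by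
  refine ⟨0, fun j hj => ?_⟩
  rw [Nat.zero_add, List.getD_eq_getElem _ _ (by simpa using hj)]
  simp

lemma not_run_replicate (K : ℕ) : ¬ Run (List.replicate K true) (K + 1) := by
  rintro ⟨i, hi⟩
  have := hi K (by omega)
  have := getD_lt this
  simp at this

end NMS

open NMS in
theorem no_maximal_solution :
    IsSolution {[false]} ∧
    ∀ S : Set (List Bool), IsSolution S → ∃ S' : Set (List Bool), IsSolution S' ∧ S ⊂ S' := by
  constructor
  · constructor
    · rintro w rfl; simp
    · intro f hf
      refine ⟨2, by omega, L1 1 f fun n => ?_⟩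
      have : f n = [false] := hf n
      rw [this]
      rintro ⟨i, hi⟩
      have := hi 0 (by omega)
      rcases i with _ | i <;> simp [List.getD] at this
  · intro S hS
    have hbound : ∃ K, ∀ w ∈ S, ¬ Run w K := by
      by_contra h
      push_neg at h
      choose g hg hrun using h
      obtain ⟨k, hk1, hk2⟩ := hS.2 g hg
      exact hk2 (L2 g hrun k)
    obtain ⟨K, hK⟩ := hbound
    set K' := max K 1 with hK'def
    have hK' : ∀ w ∈ S, ¬ Run w K' := fun w hw hr =>
      hK w hw (run_anti (le_max_left K 1) hr)
    refine ⟨insert (List.replicate K' true) S, ⟨?_, ?_⟩, ?_⟩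
    · rintro w (rfl | hw)
      · simp [hK'def]
      · exact hS.1 w hw
    · intro f hf
      refine ⟨K' + 2, by omega, L1 (K' + 1) f fun n => ?_⟩
      rcases hf n with h | h
      · rw [h]; exact not_run_replicate K'
      · exact fun hr => hK' (f n) h (run_anti (by omega) hr)
    · refine ⟨Set.subset_insert _ _, fun hsub => ?_⟩
      have hmem : List.replicate K' true ∈ S := hsub (Set.mem_insert _ _)
      exact hK' _ hmem (run_anti (le_refl _) (run_replicate K'))
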